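/- Let 𝔤 be a finite-dimensional real Lie algebra with an invariant inner product ⟨·,·⟩ (i.e. ⟨⁅z,x⁆,y⟩ + ⟨x,⁅z,y⁆⟩ = 0 for all x,y,z ∈ 𝔤), 𝔥 ⊆ 𝔤 a Lie subalgebra, 𝔪 = 𝔥^⊥, pr_𝔪 the orthogonal projection onto 𝔪, and 𝔪₀ = {v ∈ 𝔪 : ⁅w,v⁆ = 0 for all w ∈ 𝔥}; assume 𝔪₀ ≠ 0. Then for X ∈ 𝔪 \ {0}, X is a Randers equigeodesic vector if and only if X is a Riemannian equigeodesic vector and ⁅X, v⁆ ∈ 𝔥 for every v ∈ 𝔪₀. -/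

import Mathlib

/-- An invariant inner product on the subspace `𝔪` of the Lie algebra `L`, encoded as a
bilinear form on `L` which is symmetric and positive definite on `𝔪`, and `ad 𝔥`-invariant
on `𝔪`. -/
def IsInvariantInnerOn {L : Type*} [LieRing L] [LieAlgebra ℝ L]
    (𝔥 𝔪 : Submodule ℝ L) (α : L →ₗ[ℝ] L →ₗ[ℝ] ℝ) : Prop :=
  (∀ u ∈ 𝔪, ∀ v ∈ 𝔪, α u v = α v u) ∧
  (∀ u ∈ 𝔪, u ≠ 0 → 0 < α u u) ∧
  (∀ w ∈ 𝔥, ∀ u ∈ 𝔪, ∀ v ∈ 𝔪, α ⁅w, u⁆ v + α u ⁅w, v⁆ = 0)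

/-- `X` is a Riemannian equigeodesic vector: the Kowalski–Vanhecke geodesic criterion
`α(pr_𝔪 ⁅X,Z⁆, X) = 0` holds for every invariant inner product `α` on `𝔪` and all `Z ∈ 𝔪`. -/
def IsRiemannianEquigeodesicVector {L : Type*} [LieRing L] [LieAlgebra ℝ L]
    (𝔥 𝔪 : Submodule ℝ L) (pr : L →ₗ[ℝ] L) (X : L) : Prop :=
  ∀ α : L →ₗ[ℝ] L →ₗ[ℝ] ℝ, IsInvariantInnerOn 𝔥 𝔪 α →
    ∀ Z ∈ 𝔪, α (pr ⁅X, Z⁆) X = 0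

/-- `X` is a Randers equigeodesic vector: the geodesic-vector criterion
`α(pr_𝔪 ⁅X,Z⁆, X) + √(α(X,X))·α(pr_𝔪 ⁅X,Z⁆, u) = 0` for every invariant Randers metric
`F(y) = √(α(y,y)) + α(y,u)`, i.e. for every invariant inner product `α` on `𝔪`, every
`u ∈ 𝔪₀` with `α(u,u) < 1`, and every `Z ∈ 𝔪`. -/
def IsRandersEquigeodesicVector {L : Type*} [LieRing L] [LieAlgebra ℝ L]
    (𝔥 𝔪 𝔪₀ : Submodule ℝ L) (pr : L →ₗ[ℝ] L) (X : L) : Prop :=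
  ∀ α : L →ₗ[ℝ] L →ₗ[ℝ] ℝ, IsInvariantInnerOn 𝔥 𝔪 α →
    ∀ u ∈ 𝔪₀, α u u < 1 →
      ∀ Z ∈ 𝔪, α (pr ⁅X, Z⁆) X + Real.sqrt (α X X) * α (pr ⁅X, Z⁆) u = 0

/-- Riesz representation on the subspace `𝔪` with respect to a bilinear form that is
positive definite on `𝔪`. -/
lemma riesz_aux {L : Type*} [AddCommGroup L] [Module ℝ L] [FiniteDimensional ℝ L]
    (B : L →ₗ[ℝ] L →ₗ[ℝ] ℝ) (𝔪 : Submodule ℝ L)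
    (hpos : ∀ v ∈ 𝔪, v ≠ 0 → 0 < B v v)
    (f : L →ₗ[ℝ] ℝ) :
    ∃ u' ∈ 𝔪, ∀ m ∈ 𝔪, B u' m = f m := by
  classical
  set B' : LinearMap.BilinForm ℝ 𝔪 := B.compl₁₂ 𝔪.subtype 𝔪.subtype with hB'def
  have hnd : B'.Nondegenerate := by
    refine ⟨?_, ?_⟩
    all_goals
      intro v hv
      by_contra h
      have hv1 : (v : L) ≠ 0 := fun h0 => h (Subtype.ext h0)
      have h1 : 0 < B v.1 v.1 := hpos v.1 v.2 hv1
      have h2 := hv v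
      simp only [hB'def, LinearMap.compl₁₂_apply, Submodule.subtype_apply] at h2
      exact h1.ne' h2
  obtain ⟨v, hv⟩ := (LinearMap.BilinForm.toDual B' hnd).surjective (f.comp 𝔪.subtype)
  refine ⟨v.1, v.2, ?_⟩
  intro m hm
  have h3 := DFunLike.congr_fun hv ⟨m, hm⟩
  rw [LinearMap.BilinForm.toDual_def] at h3
  simpa only [hB'def, LinearMap.compl₁₂_apply, Submodule.subtype_apply,
    LinearMap.comp_apply] using h3

/-- **Criterion for Randers equigeodesic vectors (Theorem 1, (1) ⟺ (3)).**
For `X ∈ 𝔪 \ {0}`, `X` is a Randers equigeodesic vector if and only if `X` is a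
Riemannian equigeodesic vector and `⁅X, 𝔪₀⁆ ⊆ 𝔥`. -/
theorem randers_equigeodesic_iff_riemannian_and_bracket
    {L : Type*} [LieRing L] [LieAlgebra ℝ L] [FiniteDimensional ℝ L]
    (B : L →ₗ[ℝ] L →ₗ[ℝ] ℝ)
    (hBsymm : ∀ x y : L, B x y = B y x)
    (hBpos : ∀ x : L, x ≠ 0 → 0 < B x x)
    (hBinv : ∀ x y z : L, B ⁅z, x⁆ y + B x ⁅z, y⁆ = 0)
    (𝔥 : Submodule ℝ L) (h𝔥 : ∀ x ∈ 𝔥, ∀ y ∈ 𝔥, ⁅x, y⁆ ∈ 𝔥)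
    (𝔪 : Submodule ℝ L) (h𝔪 : ∀ v : L, v ∈ 𝔪 ↔ ∀ w ∈ 𝔥, B v w = 0)
    (pr : L →ₗ[ℝ] L) (hpr : ∀ x : L, pr x ∈ 𝔪 ∧ x - pr x ∈ 𝔥)
    (𝔪₀ : Submodule ℝ L)
    (h𝔪₀ : ∀ v : L, v ∈ 𝔪₀ ↔ v ∈ 𝔪 ∧ ∀ w ∈ 𝔥, ⁅w, v⁆ = 0)
    (h𝔪₀ne : 𝔪₀ ≠ ⊥)
    (X : L) (hX𝔪 : X ∈ 𝔪) (hX0 : X ≠ 0) :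
    IsRandersEquigeodesicVector 𝔥 𝔪 𝔪₀ pr X ↔
      (IsRiemannianEquigeodesicVector 𝔥 𝔪 pr X ∧ ∀ v ∈ 𝔪₀, ⁅X, v⁆ ∈ 𝔥) := by
  classical
  have hBzero : ∀ x : L, B x x = 0 → x = 0 := by
    intro x hx
    by_contra h
    exact (hBpos x h).ne' hx
  have h𝔪mem : ∀ v ∈ 𝔪, ∀ w ∈ 𝔥, B v w = 0 := fun v hv => (h𝔪 v).mp hv
  have hbr𝔥𝔪 : ∀ w ∈ 𝔥, ∀ v ∈ 𝔪, ⁅w, v⁆ ∈ 𝔪 := by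
    intro w hw v hv
    rw [h𝔪]
    intro h hh
    have h1 := hBinv v h w
    have h2 : B v ⁅w, h⁆ = 0 := h𝔪mem v hv _ (h𝔥 w hw h hh)
    linarith
  have hBinvOn : IsInvariantInnerOn 𝔥 𝔪 B :=
    ⟨fun u _ v _ => hBsymm u v, fun u _ hu => hBpos u hu,
     fun w _ u _ v _ => hBinv u v w⟩
  have hXX : 0 < B X X := hBpos X hX0
  constructor
  · intro hR
    have hRiem : IsRiemannianEquigeodesicVector 𝔥 𝔪 pr X := by
      intro α hα Z hZ
      have h1 := hR α hα 0 𝔪₀.zero_mem (by simpa using (zero_lt_one (α := ℝ))) Z hZ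
      simpa using h1
    have hkey : ∀ Z ∈ 𝔪, ∀ v ∈ 𝔪₀, B (pr ⁅X, Z⁆) v = 0 := by
      intro Z hZ v hv
      by_cases hv0 : v = 0
      · simp [hv0]
      · have hvv : 0 < B v v := hBpos v hv0
        set s := Real.sqrt (B v v) with hs
        have hs0 : 0 < s := Real.sqrt_pos.mpr hvv
        set t : ℝ := (2 * s)⁻¹ with ht
        have ht0 : 0 < t := by positivity
        have htv : t • v ∈ 𝔪₀ := 𝔪₀.smul_mem t hv
        have hss : s * s = B v v := Real.mul_self_sqrt hvv.le
        have hsmall : B (t • v) (t • v) < 1 := by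
          have e : B (t • v) (t • v) = t * (t * B v v) := by
            simp [map_smul, smul_eq_mul]
          rw [e, ht, ← hss]
          rw [show (2 * s)⁻¹ * ((2 * s)⁻¹ * (s * s)) = (s * s) / ((2*s) * (2*s)) by ring]
          rw [div_lt_one (by positivity)]
          nlinarith
        have h1 := hR B hBinvOn (t • v) htv hsmall Z hZ
        have hYX : B (pr ⁅X, Z⁆) X = 0 := hRiem B hBinvOn Z hZ
        rw [hYX, zero_add] at h1
        have hsq : 0 < Real.sqrt (B X X) := Real.sqrt_pos.mpr hXX
        have h3 : B (pr ⁅X, Z⁆) (t • v) = 0 :=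
          (mul_eq_zero.mp h1).resolve_left hsq.ne'
        have h4 : t * B (pr ⁅X, Z⁆) v = 0 := by
          simpa [map_smul, smul_eq_mul] using h3
        exact (mul_eq_zero.mp h4).resolve_left ht0.ne'
    refine ⟨hRiem, ?_⟩
    intro v hv
    have hv𝔪 : v ∈ 𝔪 := ((h𝔪₀ v).mp hv).1
    set m := pr ⁅X, v⁆ with hmdef
    have hm𝔪 : m ∈ 𝔪 := (hpr ⁅X, v⁆).1
    have hdiff : ⁅X, v⁆ - m ∈ 𝔥 := (hpr ⁅X, v⁆).2
    have hm0 : m = 0 := by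
      apply hBzero
      have e1 : B (⁅X, v⁆ - m) m = B ⁅X, v⁆ m - B m m := by
        simp [map_sub]
      have e2 : B (⁅X, v⁆ - m) m = 0 := by
        rw [hBsymm]; exact h𝔪mem m hm𝔪 _ hdiff
      have e3 := hBinv v m X
      have e4 : B v ⁅X, m⁆ = 0 := by
        have hd2 : ⁅X, m⁆ - pr ⁅X, m⁆ ∈ 𝔥 := (hpr _).2
        have f1 : B v (⁅X, m⁆ - pr ⁅X, m⁆) = 0 := h𝔪mem v hv𝔪 _ hd2
        have f2 : B v (pr ⁅X, m⁆) = 0 := by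
          rw [hBsymm]; exact hkey m hm𝔪 v hv
        have f3 : B v (⁅X, m⁆ - pr ⁅X, m⁆) = B v ⁅X, m⁆ - B v (pr ⁅X, m⁆) :=
          map_sub (B v) _ _
        linarith
      linarith
    have : ⁅X, v⁆ - m = ⁅X, v⁆ := by rw [hm0, sub_zero]
    rwa [this] at hdiff
  · rintro ⟨hRiem, hbr⟩
    intro α hα u hu hu1 Z hZ
    obtain ⟨hu𝔪, hucomm⟩ := (h𝔪₀ u).mp hu
    have hY𝔪 : pr ⁅X, Z⁆ ∈ 𝔪 := (hpr _).1
    have hYX : α (pr ⁅X, Z⁆) X = 0 := hRiem α hα Z hZ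
    obtain ⟨u', hu'𝔪, hu'⟩ := riesz_aux B 𝔪 (fun v _ hv0 => hBpos v hv0) (α.flip u)
    have hu'rep : ∀ m ∈ 𝔪, B u' m = α m u := by
      intro m hm
      simpa [LinearMap.flip_apply] using hu' m hm
    have hu'₀ : u' ∈ 𝔪₀ := by
      rw [h𝔪₀]
      refine ⟨hu'𝔪, ?_⟩
      intro w hw
      have hc𝔪 : ⁅w, u'⁆ ∈ 𝔪 := hbr𝔥𝔪 w hw u' hu'𝔪
      apply hBzero
      have e1 := hBinv u' ⁅w, u'⁆ w
      have hc2 : ⁅w, ⁅w, u'⁆⁆ ∈ 𝔪 := hbr𝔥𝔪 w hw _ hc𝔪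
      have e2 : B u' ⁅w, ⁅w, u'⁆⁆ = α ⁅w, ⁅w, u'⁆⁆ u := hu'rep _ hc2
      have e3 : α ⁅w, ⁅w, u'⁆⁆ u = 0 := by
        have e := hα.2.2 w hw ⁅w, u'⁆ hc𝔪 u hu𝔪
        rw [hucomm w hw] at e
        simpa using e
      linarith
    have hYu : α (pr ⁅X, Z⁆) u = 0 := by
      have e1 : B u' (pr ⁅X, Z⁆) = α (pr ⁅X, Z⁆) u := hu'rep _ hY𝔪
      have e2 : B (⁅X, Z⁆ - pr ⁅X, Z⁆) u' = 0 := by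
        rw [hBsymm]; exact h𝔪mem u' hu'𝔪 _ (hpr _).2
      have e3 : B ⁅X, Z⁆ u' + B Z ⁅X, u'⁆ = 0 := hBinv Z u' X
      have e4 : B Z ⁅X, u'⁆ = 0 := h𝔪mem Z hZ _ (hbr u' hu'₀)
      have e5 : B (⁅X, Z⁆ - pr ⁅X, Z⁆) u' = B ⁅X, Z⁆ u' - B (pr ⁅X, Z⁆) u' := by
        simp [map_sub]
      have e6 : B (pr ⁅X, Z⁆) u' = B u' (pr ⁅X, Z⁆) := hBsymm _ _
      linarith
    rw [hYX, hYu, mul_zero, add_zero]
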